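/- Let P be an n×l binary matrix, θ a real angle, and s ∈ F₂ˡ. Then Σ_{x ∈ F₂ˡ : x·s = 0} ℙ[X=x] = 2^{−r_s} · Σ_{c∈C(P_s)} cos( θ·(n_s − 2|c|) )², where P_s is the affinification of P by s, n_s its number of rows, and r_s the rank of C(P_s). -/

import Mathlib

open Matrix BigOperators Finset

noncomputable section

/-- The binary code generated by the columns of `P`: all vectors `P·s`. -/
def code {m : Type*} [Fintype m] {l : ℕ} (P : Matrix m (Fin l) (ZMod 2)) :
    Finset (m → ZMod 2) :=
  Finset.image P.mulVec Finset.univ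

/-- Rank function of the binary matroid of `P`: the F₂-rank of the submatrix of
rows indexed by `X`. -/
def rho {m : Type*} [Fintype m] {l : ℕ} (P : Matrix m (Fin l) (ZMod 2)) (X : Finset m) : ℕ :=
  (P.submatrix (fun i : {i // i ∈ X} => (i : m)) id).rank

/-- Tutte polynomial of the binary matroid of `P`. -/
def tutte {m : Type*} [Fintype m] {l : ℕ} (P : Matrix m (Fin l) (ZMod 2)) (x y : ℂ) : ℂ :=
  ∑ X ∈ (Finset.univ : Finset m).powerset,
    (x - 1) ^ (rho P Finset.univ - rho P X) * (y - 1) ^ (X.card - rho P X)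

/-- Normalised weight enumerator. -/
def alpha {m : Type*} [Fintype m] {l : ℕ} (P : Matrix m (Fin l) (ZMod 2)) (θ : ℝ) : ℂ :=
  (2 : ℂ) ^ (-(P.rank : ℤ)) *
    ∑ c ∈ code P, Complex.exp (Complex.I * θ * ((Fintype.card m : ℂ) - 2 * (hammingNorm c : ℂ)))

/-- The IQP probability distribution of an X-program `(P, θ)`. -/
def iqpProb {n l : ℕ} (P : Matrix (Fin n) (Fin l) (ZMod 2)) (θ : ℝ) (x : Fin l → ZMod 2) : ℝ :=
  ‖(2 : ℂ) ^ (-(l : ℤ)) *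
    ∑ a : Fin l → ZMod 2, (-1 : ℂ) ^ (x ⬝ᵥ a).val *
      Complex.exp (Complex.I * θ * ∑ j, (-1 : ℂ) ^ ((P j) ⬝ᵥ a).val)‖ ^ 2

/-- Affinification: the submatrix of rows `P_j` with `P_j ⬝ s = 1`. -/
def affin {n l : ℕ} (P : Matrix (Fin n) (Fin l) (ZMod 2)) (s : Fin l → ZMod 2) :
    Matrix {j : Fin n // (P j) ⬝ᵥ s = 1} (Fin l) (ZMod 2) :=
  Matrix.of fun j k => P j.1 k

/-! ### Auxiliary lemmas -/

namespace IQPAux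

lemma zmod2_cases (u : ZMod 2) : u = 0 ∨ u = 1 := by revert u; decide
lemma v2 : ((2:ZMod 2)).val = 0 := rfl
lemma v1 : ((1:ZMod 2)).val = 1 := rfl
lemma v0 : ((0:ZMod 2)).val = 0 := rfl

lemma chi_add {R : Type*} [CommRing R] (u v : ZMod 2) :
    (-1:R)^((u+v).val) = (-1)^u.val * (-1)^v.val := by
  rcases zmod2_cases u with rfl | rfl <;> rcases zmod2_cases v with rfl | rfl <;>
    norm_num [v0, v1, v2]

lemma chi_sum {R : Type*} [CommRing R] {ι : Type*} (t : Finset ι)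
    (g : ι → ZMod 2) : (-1:R)^((∑ i ∈ t, g i).val) = ∏ i ∈ t, (-1)^((g i).val) := by
  induction t using Finset.cons_induction with
  | empty => simp [v0]
  | cons i t hit ih => rw [Finset.sum_cons, Finset.prod_cons, chi_add, ih]

lemma sum_zmod2 {M : Type*} [AddCommMonoid M] (F : ZMod 2 → M) :
    ∑ u : ZMod 2, F u = F 0 + F 1 := by
  rw [show (Finset.univ : Finset (ZMod 2)) = {0, 1} by decide]
  simp

/-- Character orthogonality over `F₂ˡ`. -/
lemma orth {l : ℕ} (c : Fin l → ZMod 2) :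
    ∑ x : Fin l → ZMod 2, (-1:ℂ)^((x ⬝ᵥ c).val) = if c = 0 then (2:ℂ)^l else 0 := by
  have h1 : ∀ x : Fin l → ZMod 2, (-1:ℂ)^((x ⬝ᵥ c).val) = ∏ k, (-1:ℂ)^((x k * c k).val) := by
    intro x; rw [dotProduct, chi_sum]
  simp_rw [h1]
  rw [← Fintype.piFinset_univ, ← Finset.prod_univ_sum (fun _ => (univ : Finset (ZMod 2)))
    (fun k u => (-1:ℂ)^((u * c k).val))]
  have h2 : ∀ k, ∑ u : ZMod 2, (-1:ℂ)^((u * c k).val) = if c k = 0 then 2 else 0 := by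
    intro k
    rcases zmod2_cases (c k) with h | h <;> rw [h] <;> simp [sum_zmod2, v0, v1]
  simp_rw [h2]
  by_cases hc : c = 0
  · subst hc; simp
  · rw [if_neg hc]
    obtain ⟨k, hk⟩ : ∃ k, c k ≠ 0 := by
      by_contra h; push_neg at h; exact hc (funext h)
    exact Finset.prod_eq_zero (Finset.mem_univ k) (by rw [if_neg hk])

lemma half {l : ℕ} (s : Fin l → ZMod 2) (g : (Fin l → ZMod 2) → ℂ) :
    ∑ x ∈ Finset.univ.filter (fun x : Fin l → ZMod 2 => x ⬝ᵥ s = 0), g x =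
      (1/2 : ℂ) * ∑ x : Fin l → ZMod 2, (1 + (-1:ℂ)^((x ⬝ᵥ s).val)) * g x := by
  rw [← Finset.sum_filter_add_sum_filter_not Finset.univ (fun x : Fin l → ZMod 2 => x ⬝ᵥ s = 0)
    (fun x => (1 + (-1:ℂ)^((x ⬝ᵥ s).val)) * g x)]
  have h1 : ∀ x ∈ Finset.univ.filter (fun x : Fin l → ZMod 2 => x ⬝ᵥ s = 0),
      (1 + (-1:ℂ)^((x ⬝ᵥ s).val)) * g x = 2 * g x := by
    intro x hx
    rw [Finset.mem_filter] at hx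
    rw [hx.2, v0]; ring
  have h2 : ∀ x ∈ Finset.univ.filter (fun x : Fin l → ZMod 2 => ¬ x ⬝ᵥ s = 0),
      (1 + (-1:ℂ)^((x ⬝ᵥ s).val)) * g x = 0 := by
    intro x hx
    rw [Finset.mem_filter] at hx
    rcases zmod2_cases (x ⬝ᵥ s) with h | h
    · exact absurd h hx.2
    · rw [h, v1]; ring
  rw [Finset.sum_congr rfl h1, Finset.sum_congr rfl h2, Finset.sum_const_zero, add_zero,
    ← Finset.mul_sum]
  ring

lemma double {l : ℕ} (f : (Fin l → ZMod 2) → ℂ) (t : Fin l → ZMod 2) :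
    ∑ x : Fin l → ZMod 2, (-1:ℂ)^((x ⬝ᵥ t).val) *
      ((∑ a : Fin l → ZMod 2, (-1:ℂ)^((x ⬝ᵥ a).val) * f a) *
       (∑ b : Fin l → ZMod 2, (-1:ℂ)^((x ⬝ᵥ b).val) * (starRingEnd ℂ) (f b))) =
    (2:ℂ)^l * ∑ a : Fin l → ZMod 2, f a * (starRingEnd ℂ) (f (a + t)) := by
  have key : ∀ x a b : Fin l → ZMod 2,
      (-1:ℂ)^((x ⬝ᵥ t).val) * ((-1:ℂ)^((x ⬝ᵥ a).val) * f a *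
        ((-1:ℂ)^((x ⬝ᵥ b).val) * (starRingEnd ℂ) (f b))) =
      (-1:ℂ)^((x ⬝ᵥ (t + a + b)).val) * (f a * (starRingEnd ℂ) (f b)) := by
    intro x a b
    rw [dotProduct_add, dotProduct_add, chi_add, chi_add]
    ring
  calc ∑ x : Fin l → ZMod 2, (-1:ℂ)^((x ⬝ᵥ t).val) *
        ((∑ a : Fin l → ZMod 2, (-1:ℂ)^((x ⬝ᵥ a).val) * f a) *
         (∑ b : Fin l → ZMod 2, (-1:ℂ)^((x ⬝ᵥ b).val) * (starRingEnd ℂ) (f b)))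
      = ∑ a : Fin l → ZMod 2, ∑ b : Fin l → ZMod 2,
          (∑ x : Fin l → ZMod 2, (-1:ℂ)^((x ⬝ᵥ (t + a + b)).val)) *
            (f a * (starRingEnd ℂ) (f b)) := by
        simp_rw [Finset.sum_mul_sum, Finset.mul_sum, key]
        rw [Finset.sum_comm]
        congr 1; ext a
        rw [Finset.sum_comm]
        congr 1; ext b
        rw [Finset.sum_mul]
    _ = ∑ a : Fin l → ZMod 2, ∑ b : Fin l → ZMod 2,
          (if b = a + t then (2:ℂ)^l else 0) * (f a * (starRingEnd ℂ) (f b)) := by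
        congr 1; ext a; congr 1; ext b
        rw [orth]
        congr 1
        have hpt : ∀ u v w : ZMod 2, (u + v + w = 0 ↔ w = v + u) := by decide
        have : t + a + b = 0 ↔ b = a + t := by
          rw [funext_iff, funext_iff]
          simp only [Pi.add_apply, Pi.zero_apply]
          exact forall_congr' fun k => hpt (t k) (a k) (b k)
        simp [this]
    _ = (2:ℂ)^l * ∑ a : Fin l → ZMod 2, f a * (starRingEnd ℂ) (f (a + t)) := by
        rw [Finset.mul_sum]
        congr 1; ext a
        simp_rw [ite_mul, zero_mul]
        rw [Finset.sum_ite_eq' Finset.univ (a+t)]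
        simp

lemma signsum {m : Type*} [Fintype m] (w : m → ZMod 2) :
    ∑ j : m, (-1:ℝ)^((w j).val) = (Fintype.card m : ℝ) - 2 * (hammingNorm w : ℝ) := by
  have h : ∀ j, (-1:ℝ)^((w j).val) = 1 - 2 * (if w j ≠ 0 then (1:ℝ) else 0) := by
    intro j
    rcases zmod2_cases (w j) with h | h <;> rw [h] <;> norm_num [v0, v1]
  simp_rw [h]
  rw [Finset.sum_sub_distrib, ← Finset.mul_sum, Finset.sum_boole]
  simp only [Finset.sum_const, Finset.card_univ, nsmul_eq_mul, mul_one]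
  congr 2

lemma fiber_card {l : ℕ} {m : Type*} [Fintype m] (Q : Matrix m (Fin l) (ZMod 2))
    (b : m → ZMod 2) (a₀ : Fin l → ZMod 2) (h : Q.mulVec a₀ = b) :
    #(Finset.univ.filter (fun a : Fin l → ZMod 2 => Q.mulVec a = b)) = 2 ^ (l - Q.rank) := by
  have hcard : #(Finset.univ.filter (fun a : Fin l → ZMod 2 => Q.mulVec a = b)) =
      Fintype.card {a : Fin l → ZMod 2 // Q.mulVec a = b} := (Fintype.card_subtype _).symm
  rw [hcard]
  haveI : Fintype ↥(LinearMap.ker Q.mulVecLin) := Fintype.ofFinite _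
  have e : {a : Fin l → ZMod 2 // Q.mulVec a = b} ≃ LinearMap.ker Q.mulVecLin :=
    { toFun := fun a => ⟨a.1 - a₀, by
        rw [LinearMap.mem_ker, map_sub]
        simp only [Matrix.mulVecLin_apply, a.2, h, sub_self]⟩
      invFun := fun k => ⟨k.1 + a₀, by
        have hk := k.2
        rw [LinearMap.mem_ker] at hk
        have : Q.mulVecLin (k.1 + a₀) = b := by
          rw [map_add, hk, zero_add, Matrix.mulVecLin_apply, h]
        rwa [Matrix.mulVecLin_apply] at this⟩
      left_inv := fun a => by ext; simp
      right_inv := fun k => by ext; simp }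
  rw [Fintype.card_congr e, Module.card_eq_pow_finrank (K := ZMod 2), ZMod.card]
  congr 1
  have := LinearMap.finrank_range_add_finrank_ker Q.mulVecLin
  rw [Module.finrank_pi, Fintype.card_fin] at this
  have hrank : Q.rank = Module.finrank (ZMod 2) (LinearMap.range Q.mulVecLin) := rfl
  omega

lemma fiber_sum {l : ℕ} {m : Type*} [Fintype m] (Q : Matrix m (Fin l) (ZMod 2))
    (F : (m → ZMod 2) → ℝ) :
    ∑ a : Fin l → ZMod 2, F (Q.mulVec a) = (2:ℝ) ^ (l - Q.rank) * ∑ c ∈ code Q, F c := by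
  rw [Finset.sum_comp F Q.mulVec, Finset.mul_sum]
  apply Finset.sum_congr rfl
  intro b hb
  rw [Finset.mem_image] at hb
  obtain ⟨a₀, _, ha₀⟩ := hb
  rw [fiber_card Q b a₀ ha₀, nsmul_eq_mul]
  push_cast
  ring

variable {n l : ℕ} (P : Matrix (Fin n) (Fin l) (ZMod 2)) (θ : ℝ) (s : Fin l → ZMod 2)

def gfun (a : Fin l → ZMod 2) : ℝ := ∑ j, (-1:ℝ)^((P j ⬝ᵥ a).val)

def ffun (a : Fin l → ZMod 2) : ℂ := Complex.exp (Complex.I * θ * ((gfun P a : ℝ) : ℂ))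

def Tfun (x : Fin l → ZMod 2) : ℂ :=
  ∑ a : Fin l → ZMod 2, (-1:ℂ)^((x ⬝ᵥ a).val) * ffun P θ a

lemma gcast (a : Fin l → ZMod 2) :
    ((gfun P a : ℝ) : ℂ) = ∑ j, (-1:ℂ)^((P j ⬝ᵥ a).val) := by
  unfold gfun; push_cast; rfl

lemma conj_ffun (a : Fin l → ZMod 2) :
    (starRingEnd ℂ) (ffun P θ a) = Complex.exp (-(Complex.I * θ * ((gfun P a : ℝ) : ℂ))) := by
  unfold ffun
  rw [← Complex.exp_conj]
  congr 1
  rw [_root_.map_mul, _root_.map_mul, Complex.conj_I, Complex.conj_ofReal, Complex.conj_ofReal]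
  ring

lemma ffun_mul_conj (a b : Fin l → ZMod 2) :
    ffun P θ a * (starRingEnd ℂ) (ffun P θ b) =
      Complex.exp (((θ * (gfun P a - gfun P b) : ℝ) : ℂ) * Complex.I) := by
  rw [conj_ffun]
  unfold ffun
  rw [← Complex.exp_add]
  congr 1
  push_cast
  ring

lemma ffun_mul_conj_self (a : Fin l → ZMod 2) :
    ffun P θ a * (starRingEnd ℂ) (ffun P θ a) = 1 := by
  rw [ffun_mul_conj, sub_self, mul_zero, Complex.ofReal_zero, zero_mul, Complex.exp_zero]

lemma gdiff (a : Fin l → ZMod 2) :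
    gfun P a - gfun P (a + s) =
      2 * ((Fintype.card {j : Fin n // P j ⬝ᵥ s = 1} : ℝ) -
        2 * (hammingNorm ((affin P s).mulVec a) : ℝ)) := by
  have hterm : ∀ j : Fin n, (-1:ℝ)^((P j ⬝ᵥ a).val) - (-1:ℝ)^((P j ⬝ᵥ (a + s)).val) =
      if P j ⬝ᵥ s = 1 then 2 * (-1:ℝ)^((P j ⬝ᵥ a).val) else 0 := by
    intro j
    rw [dotProduct_add]
    rcases zmod2_cases (P j ⬝ᵥ s) with h | h <;> rw [h]
    · rw [if_neg (by decide), add_zero, sub_self]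
    · rw [if_pos rfl]
      rcases zmod2_cases (P j ⬝ᵥ a) with h2 | h2 <;> rw [h2] <;> norm_num [v0, v1, v2]
  unfold gfun
  have hsub : ∑ j ∈ Finset.univ.filter (fun j => P j ⬝ᵥ s = 1), 2 * (-1:ℝ)^((P j ⬝ᵥ a).val)
      = ∑ j : {j : Fin n // P j ⬝ᵥ s = 1}, 2 * (-1:ℝ)^((P j.1 ⬝ᵥ a).val) :=
    Finset.sum_subtype _ (fun j => by simp) _
  rw [← Finset.sum_sub_distrib, Finset.sum_congr rfl (fun j _ => hterm j), ← Finset.sum_filter,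
    hsub, ← Finset.mul_sum]
  congr 1
  have : ∀ j : {j : Fin n // P j ⬝ᵥ s = 1},
      (-1:ℝ)^((P j.1 ⬝ᵥ a).val) = (-1:ℝ)^((((affin P s).mulVec a) j).val) := fun j => rfl
  rw [Finset.sum_congr rfl (fun j _ => this j), signsum]

lemma point (a : Fin l → ZMod 2) :
    (1 + ffun P θ a * (starRingEnd ℂ) (ffun P θ (a + s))).re =
      2 * Real.cos (θ * ((Fintype.card {j : Fin n // P j ⬝ᵥ s = 1} : ℝ) -
        2 * (hammingNorm ((affin P s).mulVec a) : ℝ))) ^ 2 := by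
  rw [ffun_mul_conj, Complex.add_re, Complex.one_re, Complex.exp_ofReal_mul_I_re, gdiff]
  set y := θ * ((Fintype.card {j : Fin n // P j ⬝ᵥ s = 1} : ℝ) -
    2 * (hammingNorm ((affin P s).mulVec a) : ℝ)) with hy
  have hyy : θ * (2 * ((Fintype.card {j : Fin n // P j ⬝ᵥ s = 1} : ℝ) -
      2 * (hammingNorm ((affin P s).mulVec a) : ℝ))) = 2 * y := by rw [hy]; ring
  rw [hyy, Real.cos_two_mul]
  ring

lemma double' (t : Fin l → ZMod 2) :
    ∑ x : Fin l → ZMod 2, (-1:ℂ)^((x ⬝ᵥ t).val) *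
        (Tfun P θ x * (starRingEnd ℂ) (Tfun P θ x)) =
      (2:ℂ)^l * ∑ a : Fin l → ZMod 2, ffun P θ a * (starRingEnd ℂ) (ffun P θ (a + t)) := by
  have hconj : ∀ x, (starRingEnd ℂ) (Tfun P θ x) =
      ∑ b : Fin l → ZMod 2, (-1:ℂ)^((x ⬝ᵥ b).val) * (starRingEnd ℂ) (ffun P θ b) := by
    intro x
    rw [Tfun, map_sum]
    exact Finset.sum_congr rfl fun b _ => by rw [_root_.map_mul, map_pow, map_neg, _root_.map_one]
  simp_rw [hconj]
  exact double (ffun P θ) t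

lemma sum_filter_T :
    ∑ x ∈ Finset.univ.filter (fun x : Fin l → ZMod 2 => x ⬝ᵥ s = 0),
        Tfun P θ x * (starRingEnd ℂ) (Tfun P θ x) =
      (((2:ℝ)^l/2 : ℝ) : ℂ) *
        ∑ a : Fin l → ZMod 2, (1 + ffun P θ a * (starRingEnd ℂ) (ffun P θ (a + s))) := by
  rw [half s (fun x => Tfun P θ x * (starRingEnd ℂ) (Tfun P θ x))]
  have expand : ∀ x : Fin l → ZMod 2,
      (1 + (-1:ℂ)^((x ⬝ᵥ s).val)) * (Tfun P θ x * (starRingEnd ℂ) (Tfun P θ x)) =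
      (-1:ℂ)^((x ⬝ᵥ (0 : Fin l → ZMod 2)).val) * (Tfun P θ x * (starRingEnd ℂ) (Tfun P θ x)) +
      (-1:ℂ)^((x ⬝ᵥ s).val) * (Tfun P θ x * (starRingEnd ℂ) (Tfun P θ x)) := by
    intro x
    rw [dotProduct_zero, v0, pow_zero]
    ring
  rw [Finset.sum_congr rfl (fun x _ => expand x), Finset.sum_add_distrib,
    double' P θ 0, double' P θ s]
  simp_rw [add_zero, ffun_mul_conj_self]
  rw [Finset.sum_add_distrib]
  push_cast
  ring

end IQPAux

/-- `Σ_{x : x·s=0} ℙ[X=x] = 2^{−r_s} · Σ_{c∈C(P_s)} cos(θ(n_s−2|c|))²`. -/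
theorem prob_parity_eq_cos_sq {n l : ℕ} (P : Matrix (Fin n) (Fin l) (ZMod 2)) (θ : ℝ)
    (s : Fin l → ZMod 2) :
    ∑ x ∈ Finset.univ.filter (fun x : Fin l → ZMod 2 => x ⬝ᵥ s = 0), iqpProb P θ x =
      (2 : ℝ) ^ (-((affin P s).rank : ℤ)) *
        ∑ c ∈ code (affin P s),
          Real.cos (θ * ((Fintype.card {j : Fin n // (P j) ⬝ᵥ s = 1} : ℝ) -
            2 * (hammingNorm c : ℝ))) ^ 2 := by
  classical
  -- Step 1: rewrite `iqpProb` in terms of `Tfun`.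
  have hiqp : ∀ x : Fin l → ZMod 2, iqpProb P θ x =
      ((2:ℝ)^(-(l:ℤ)))^2 *
        (IQPAux.Tfun P θ x * (starRingEnd ℂ) (IQPAux.Tfun P θ x)).re := by
    intro x
    have h1 : ∀ a : Fin l → ZMod 2,
        Complex.exp (Complex.I * θ * ∑ j, (-1:ℂ)^((P j ⬝ᵥ a).val)) = IQPAux.ffun P θ a := by
      intro a
      rw [← IQPAux.gcast]
      rfl
    have habs : ‖(2:ℂ)^(-(l:ℤ))‖ = (2:ℝ)^(-(l:ℤ)) := by
      rw [norm_zpow, Complex.norm_two]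
    unfold iqpProb
    simp only [h1]
    rw [norm_mul, habs, mul_pow, Complex.sq_norm, Complex.mul_conj, Complex.ofReal_re]
    rfl
  rw [Finset.sum_congr rfl (fun x _ => hiqp x), ← Finset.mul_sum, ← Complex.re_sum,
    IQPAux.sum_filter_T P θ s, Complex.re_ofReal_mul, Complex.re_sum,
    Finset.sum_congr rfl (fun a _ => IQPAux.point P θ s a), ← Finset.mul_sum]
  -- Step 2: fiber counting.
  rw [IQPAux.fiber_sum (affin P s)
    (fun c => Real.cos (θ * ((Fintype.card {j : Fin n // (P j) ⬝ᵥ s = 1} : ℝ) -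
      2 * (hammingNorm c : ℝ))) ^ 2)]
  -- Step 3: coefficient arithmetic.
  have hr : (affin P s).rank ≤ l := by
    have := Matrix.rank_le_card_width (affin P s)
    rwa [Fintype.card_fin] at this
  set r := (affin P s).rank with hrdef
  have h2 : (2:ℝ) ≠ 0 := two_ne_zero
  have hmul : ∀ k : ℕ, (2:ℝ)^(-(k:ℤ)) * (2:ℝ)^k = 1 := by
    intro k
    rw [← zpow_natCast (2:ℝ) k, ← zpow_add₀ h2]
    simp
  have hsub : (2:ℝ)^(l - r) * 2^r = 2^l := by rw [← pow_add, Nat.sub_add_cancel hr]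
  have h5 : ((2:ℝ)^(-(l:ℤ)))^2 * ((2:ℝ)^l/2) * 2 * (2:ℝ)^(l - r) * 2^r = 1 := by
    calc ((2:ℝ)^(-(l:ℤ)))^2 * ((2:ℝ)^l/2) * 2 * (2:ℝ)^(l - r) * 2^r
        = ((2:ℝ)^(-(l:ℤ)))^2 * ((2:ℝ)^l/2) * 2 * ((2:ℝ)^(l - r) * 2^r) := by ring
      _ = ((2:ℝ)^(-(l:ℤ)) * 2^l)^2 := by rw [hsub]; ring
      _ = 1 := by rw [hmul]; norm_num
  have h6 : (2:ℝ)^(-(r:ℤ)) * 2^r = 1 := hmul r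
  have hpow : (2:ℝ)^r ≠ 0 := pow_ne_zero r h2
  have key : ((2:ℝ)^(-(l:ℤ)))^2 * ((2:ℝ)^l/2) * 2 * (2:ℝ)^(l - r) = (2:ℝ)^(-(r:ℤ)) := by
    linear_combination (2:ℝ)^(-(r:ℤ)) * h5 -
      (((2:ℝ)^(-(l:ℤ)))^2 * ((2:ℝ)^l/2) * 2 * (2:ℝ)^(l - r)) * h6
  rw [← key]
  ring

end
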